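/- (Two-point Pólya/Whittaker theorem.) Let E = [e_{ij}] be a 2×(n+1) 0-1 matrix with exactly n+1 ones, with rows indexed by points t_0 = 0, t_1 = 1. The (n+1)×(n+1) matrix whose rows are indexed by pairs (i,j) with e_{ij}=1 and whose row for (i,j) is [D^j(t^0)(t_i), D^j(t^1)(t_i), ..., D^j(t^n)(t_i)] (j-th derivative of each monomial evaluated at t_i) is invertible if and only if E satisfies the Pólya condition M_j ≥ j+1 for all j. -/

import Mathlib

open Polynomial Matrix Finset

lemma det_eq_zero_of_block {R : Type*} [CommRing R] {ι : Type*} [DecidableEq ι] [Fintype ι]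
    (M : Matrix ι ι R) (S T : Finset ι) (hcard : T.card < S.card)
    (h : ∀ q, q ∉ T → ∀ c ∈ S, M q c = 0) : M.det = 0 := by
  rw [Matrix.det_apply']
  refine Finset.sum_eq_zero fun σ _ => ?_
  obtain ⟨x, hxS, hxT⟩ : ∃ x ∈ S, σ x ∉ T := by
    by_contra h'
    push_neg at h'
    have hsub : S.image σ ⊆ T := by
      intro x hx
      obtain ⟨y, hy, rfl⟩ := Finset.mem_image.mp hx
      exact h' y hy
    have := Finset.card_le_card hsub
    rw [Finset.card_image_of_injective _ σ.injective] at this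
    omega
  exact mul_eq_zero_of_right _ (Finset.prod_eq_zero (Finset.mem_univ x) (h _ hxT x hxS))

lemma derivative_finset_prod' {R : Type*} [CommSemiring R] {ι : Type*} [DecidableEq ι]
    (s : Finset ι) (f : ι → R[X]) :
    derivative (∏ i ∈ s, f i) = ∑ i ∈ s, (∏ j ∈ s.erase i, f j) * derivative (f i) := by
  induction s using Finset.induction with
  | empty => simp
  | @insert a s ha ih =>
      rw [Finset.prod_insert ha, derivative_mul, ih, Finset.sum_insert ha,
        Finset.erase_insert ha, Finset.mul_sum]
      congr 1
      · exact mul_comm _ _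
      · refine Finset.sum_congr rfl fun i hi => ?_
        have hia : i ≠ a := fun h => ha (h ▸ hi)
        rw [Finset.erase_insert_of_ne hia.symm, Finset.prod_insert
          (fun h => ha (Finset.mem_of_mem_erase h)), mul_assoc]

lemma derivative_det_col {R : Type*} [CommRing R] {ι : Type*} [DecidableEq ι] [Fintype ι]
    (M : Matrix ι ι R[X]) :
    derivative M.det = ∑ k : ι, (M.updateCol k (fun i => derivative (M i k))).det := by
  simp only [Matrix.det_apply']
  rw [map_sum, Finset.sum_comm]
  refine Finset.sum_congr rfl fun σ _ => ?_
  rw [derivative_mul, derivative_finset_prod', Finset.mul_sum]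
  have hcast : derivative ((Equiv.Perm.sign σ : ℤ) : R[X]) = 0 := by simp
  rw [hcast, zero_mul, zero_add]
  refine Finset.sum_congr rfl fun k _ => ?_
  congr 1
  rw [← Finset.mul_prod_erase Finset.univ _ (Finset.mem_univ k)]
  rw [Matrix.updateCol_apply, if_pos rfl, mul_comm]
  congr 1
  refine Finset.prod_congr rfl fun i hi => ?_
  rw [Matrix.updateCol_apply, if_neg (Finset.ne_of_mem_erase hi)]

lemma derivative_det_row {R : Type*} [CommRing R] {ι : Type*} [DecidableEq ι] [Fintype ι]
    (M : Matrix ι ι R[X]) :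
    derivative M.det = ∑ k : ι, (M.updateRow k (fun l => derivative (M k l))).det := by
  rw [← Matrix.det_transpose M, derivative_det_col]
  refine Finset.sum_congr rfl fun k _ => ?_
  rw [Matrix.updateCol_transpose, Matrix.det_transpose]
  rfl

noncomputable def Pm {m : ℕ} (b c : Fin m → ℕ) : Polynomial ℚ :=
  (Matrix.of fun k l : Fin m =>
    (Polynomial.C (((c l).descFactorial (b k) : ℕ) : ℚ)) * Polynomial.X ^ (c l - b k)).det

lemma deriv_entry (cl bk : ℕ) :
    derivative (C ((cl.descFactorial bk : ℕ) : ℚ) * X ^ (cl - bk)) =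
      C ((cl.descFactorial (bk + 1) : ℕ) : ℚ) * X ^ (cl - (bk + 1)) := by
  rw [derivative_C_mul, derivative_X_pow, ← mul_assoc]
  have h1 : cl - bk - 1 = cl - (bk + 1) := by omega
  rw [h1]
  congr 1
  rw [← C_mul, ← Nat.cast_mul, Nat.descFactorial_succ, Nat.mul_comm]

lemma Pm_block_zero {m : ℕ} (b c : Fin m → ℕ) (hc : Monotone c) (k : Fin m)
    (hq : ∀ q, k ≤ q → b k ≤ b q) (h : c k < b k) : Pm b c = 0 := by
  refine det_eq_zero_of_block _ (Finset.Iic k) (Finset.Iio k) ?_ ?_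
  · rw [Fin.card_Iic, Fin.card_Iio]; omega
  · intro q hqT l hl
    have hkq : k ≤ q := not_lt.mp (by simpa [Finset.mem_Iio] using hqT)
    have h1 : c l < b q := lt_of_le_of_lt (hc (Finset.mem_Iic.mp hl)) (lt_of_lt_of_le h (hq q hkq))
    show C (((c l).descFactorial (b q) : ℕ) : ℚ) * X ^ (c l - b q) = 0
    rw [Nat.descFactorial_eq_zero_iff_lt.mpr h1]
    simp

lemma Pm_coeff_nonneg_ne_zero :
    ∀ (N : ℕ) {m : ℕ} (b c : Fin m → ℕ), StrictMono b → StrictMono c →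
      (∀ k, b k ≤ c k) → (∑ k, (c k - b k)) = N →
      (∀ j, 0 ≤ (Pm b c).coeff j) ∧ Pm b c ≠ 0 := by
  intro N
  induction N using Nat.strong_induction_on with
  | _ N IH =>
  intro m b c hb hc hbc hN
  by_cases hbceq : ∀ k, b k = c k
  · have hPm : Pm b c = C (∏ k, ((b k).factorial : ℚ)) := by
      unfold Pm
      rw [Matrix.det_of_upperTriangular]
      · have hdiag : ∀ k : Fin m, (Matrix.of fun k l : Fin m =>
            (Polynomial.C (((c l).descFactorial (b k) : ℕ) : ℚ)) *
              Polynomial.X ^ (c l - b k)) k k = C (((b k).factorial : ℕ) : ℚ) := by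
          intro k
          show C (((c k).descFactorial (b k) : ℕ) : ℚ) * X ^ (c k - b k) = _
          rw [← hbceq k, Nat.sub_self, pow_zero, mul_one, Nat.descFactorial_self]
        rw [Finset.prod_congr rfl fun k _ => hdiag k, ← map_prod]
      · intro i j hji
        show C (((c j).descFactorial (b i) : ℕ) : ℚ) * X ^ (c j - b i) = 0
        have hlt : c j < b i := by rw [← hbceq j]; exact hb hji
        rw [Nat.descFactorial_eq_zero_iff_lt.mpr hlt]
        simp
    constructor
    · intro j
      rw [hPm, coeff_C]
      split
      · positivity
      · exact le_refl 0
    · rw [hPm]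
      simp only [ne_eq, Polynomial.C_eq_zero]
      exact Finset.prod_ne_zero_iff.mpr fun k _ => by positivity
  · push_neg at hbceq
    have hsne : (Finset.univ.filter fun k => b k < c k).Nonempty := by
      obtain ⟨k, hk⟩ := hbceq
      exact ⟨k, Finset.mem_filter.mpr ⟨Finset.mem_univ _, lt_of_le_of_ne (hbc k) hk⟩⟩
    set k0 := (Finset.univ.filter fun k => b k < c k).max' hsne with hk0def
    have hk0 : b k0 < c k0 :=
      (Finset.mem_filter.mp ((Finset.univ.filter fun k => b k < c k).max'_mem hsne)).2
    have hk0max : ∀ j, k0 < j → b j = c j := by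
      intro j hj
      by_contra hne
      have hmem : j ∈ Finset.univ.filter fun k => b k < c k :=
        Finset.mem_filter.mpr ⟨Finset.mem_univ _, lt_of_le_of_ne (hbc j) hne⟩
      exact absurd (Finset.le_max' _ j hmem) (not_le.mpr hj)
    have hderiv : derivative (Pm b c) = ∑ k, Pm (Function.update b k (b k + 1)) c := by
      unfold Pm
      rw [derivative_det_row]
      refine Finset.sum_congr rfl fun k _ => ?_
      congr 1
      refine Matrix.ext fun q l => ?_
      rw [Matrix.updateRow_apply]
      by_cases hq : q = k
      · subst hq
        rw [if_pos rfl]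
        rw [Matrix.of_apply, Matrix.of_apply]
        rw [deriv_entry, Function.update_self]
      · rw [if_neg hq]
        show C (((c l).descFactorial (b q) : ℕ) : ℚ) * X ^ (c l - b q) =
          C (((c l).descFactorial (Function.update b k (b k + 1) q) : ℕ) : ℚ) *
            X ^ (c l - Function.update b k (b k + 1) q)
        rw [Function.update_of_ne hq]
    have hkclaim : ∀ k : Fin m, (∀ j, 0 ≤ (Pm (Function.update b k (b k + 1)) c).coeff j) ∧
        ((b k + 1 ≤ c k ∧ ∀ j, j ≠ k → b j ≠ b k + 1) →
          Pm (Function.update b k (b k + 1)) c ≠ 0) := by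
      intro k
      by_cases h1 : c k < b k + 1
      · have hzero : Pm (Function.update b k (b k + 1)) c = 0 := by
          refine Pm_block_zero _ c hc.monotone k ?_ ?_
          · intro q hqk
            rcases eq_or_lt_of_le hqk with rfl | hlt
            · exact le_refl _
            · rw [Function.update_self, Function.update_of_ne (ne_of_gt hlt)]
              exact hb hlt
          · rw [Function.update_self]; exact h1
        exact ⟨fun j => by rw [hzero]; simp, fun hcond => absurd hcond.1 (by omega)⟩
      · by_cases h2 : ∃ j, j ≠ k ∧ b j = b k + 1
        · obtain ⟨j, hjk, hjval⟩ := h2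
          have hzero : Pm (Function.update b k (b k + 1)) c = 0 := by
            unfold Pm
            refine Matrix.det_zero_of_row_eq hjk (funext fun l => ?_)
            show C (((c l).descFactorial (Function.update b k (b k + 1) j) : ℕ) : ℚ) *
                X ^ (c l - Function.update b k (b k + 1) j) =
              C (((c l).descFactorial (Function.update b k (b k + 1) k) : ℕ) : ℚ) *
                X ^ (c l - Function.update b k (b k + 1) k)
            rw [Function.update_of_ne hjk, Function.update_self, hjval]
          exact ⟨fun j' => by rw [hzero]; simp,
            fun hcond => absurd hjval (hcond.2 j hjk)⟩
        · push_neg at h2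
          have hb1 : b k + 1 ≤ c k := not_lt.mp h1
          have hb'mono : StrictMono (Function.update b k (b k + 1)) := by
            intro x y hxy
            by_cases hx : x = k
            · have hyk : y ≠ k := by rw [← hx]; exact Ne.symm (ne_of_lt hxy)
              rw [hx, Function.update_self, Function.update_of_ne hyk]
              have h3 : b k < b y := hb (hx ▸ hxy)
              have h4 := h2 y hyk
              omega
            · by_cases hy : y = k
              · have hxk : x ≠ k := hx
                rw [hy, Function.update_of_ne hxk, Function.update_self]
                have h3 : b x < b k := hb (hy ▸ hxy)
                omega
              · rw [Function.update_of_ne hx, Function.update_of_ne hy]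
                exact hb hxy
          have hb'le : ∀ j, Function.update b k (b k + 1) j ≤ c j := by
            intro j
            by_cases hj : j = k
            · subst hj; rw [Function.update_self]; exact hb1
            · rw [Function.update_of_ne hj]; exact hbc j
          have hlt : (∑ j, (c j - Function.update b k (b k + 1) j)) < N := by
            rw [← hN]
            refine Finset.sum_lt_sum (fun j _ => ?_) ⟨k, Finset.mem_univ k, ?_⟩
            · by_cases hj : j = k
              · subst hj; rw [Function.update_self]; omega
              · rw [Function.update_of_ne hj]
            · rw [Function.update_self]; omega
          have := IH _ hlt _ c hb'mono hc hb'le rfl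
          exact ⟨this.1, fun _ => this.2⟩
    have hdcoeff : ∀ j, 0 ≤ (derivative (Pm b c)).coeff j := by
      intro j
      rw [hderiv, finset_sum_coeff]
      exact Finset.sum_nonneg fun k _ => (hkclaim k).1 j
    have hk0cond : b k0 + 1 ≤ c k0 ∧ ∀ j, j ≠ k0 → b j ≠ b k0 + 1 := by
      refine ⟨hk0, fun j hj => ?_⟩
      rcases lt_or_gt_of_ne hj with h | h
      · have := hb h; omega
      · have h1 := hk0max j h
        have h2 := hc h
        omega
    have hdne : ∃ j0, 0 < (derivative (Pm b c)).coeff j0 := by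
      have hne := (hkclaim k0).2 hk0cond
      have hnn := (hkclaim k0).1
      refine ⟨(Pm (Function.update b k0 (b k0 + 1)) c).natDegree, ?_⟩
      rw [hderiv, finset_sum_coeff]
      refine Finset.sum_pos' (fun k _ => (hkclaim k).1 _) ⟨k0, Finset.mem_univ _, ?_⟩
      refine lt_of_le_of_ne (hnn _) (Ne.symm fun h => hne ?_)
      exact leadingCoeff_eq_zero.mp h
    have hkbad : ∃ kb, ∀ l, c l ≠ b kb := by
      by_contra hcon
      push_neg at hcon
      have hbc_img : ∀ i, b i ∈ Finset.univ.image c := fun i => by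
        obtain ⟨l, hl⟩ := hcon i
        exact Finset.mem_image.mpr ⟨l, Finset.mem_univ _, hl⟩
      have hcimg : (Finset.univ.image c).card = m := by
        rw [Finset.card_image_of_injective _ hc.injective, Finset.card_univ, Fintype.card_fin]
      have hbeq := Finset.orderEmbOfFin_unique hcimg hbc_img hb
      have hceq := Finset.orderEmbOfFin_unique hcimg
        (fun i => Finset.mem_image_of_mem c (Finset.mem_univ i)) hc
      obtain ⟨k, hk⟩ := hbceq
      refine hk ?_
      rw [hbeq]
      exact (congrFun hceq k).symm
    obtain ⟨kb, hkb⟩ := hkbad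
    have hcoeff0 : (Pm b c).coeff 0 = 0 := by
      rw [coeff_zero_eq_eval_zero]
      unfold Pm
      rw [show eval 0 (Matrix.of fun k l : Fin m =>
          (Polynomial.C (((c l).descFactorial (b k) : ℕ) : ℚ)) *
            Polynomial.X ^ (c l - b k)).det =
          (evalRingHom 0) (Matrix.of fun k l : Fin m =>
          (Polynomial.C (((c l).descFactorial (b k) : ℕ) : ℚ)) *
            Polynomial.X ^ (c l - b k)).det from rfl, RingHom.map_det]
      refine Matrix.det_eq_zero_of_row_eq_zero kb fun l => ?_
      show (evalRingHom 0) (C (((c l).descFactorial (b kb) : ℕ) : ℚ) * X ^ (c l - b kb)) = 0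
      rcases lt_trichotomy (c l) (b kb) with h | h | h
      · rw [Nat.descFactorial_eq_zero_iff_lt.mpr h]; simp
      · exact absurd h (hkb l)
      · have hne0 : c l - b kb ≠ 0 := by omega
        simp [zero_pow hne0]
    constructor
    · intro j
      cases j with
      | zero => rw [hcoeff0]
      | succ j =>
        have h1 := coeff_derivative (Pm b c) j
        have h2 := hdcoeff j
        rw [h1] at h2
        have h3 : (0:ℚ) < (j:ℚ) + 1 := by positivity
        nlinarith
    · obtain ⟨j0, hj0⟩ := hdne
      intro h
      rw [h, derivative_zero] at hj0
      simp at hj0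

lemma det_desc_pos {m : ℕ} (b c : Fin m → ℕ) (hb : StrictMono b) (hc : StrictMono c)
    (hbc : ∀ k, b k ≤ c k) :
    0 < (Matrix.of fun k l : Fin m => (((c l).descFactorial (b k) : ℕ) : ℚ)).det := by
  obtain ⟨hnn, hne⟩ := Pm_coeff_nonneg_ne_zero _ b c hb hc hbc rfl
  have heval : (Matrix.of fun k l : Fin m => (((c l).descFactorial (b k) : ℕ) : ℚ)).det
      = (Pm b c).eval 1 := by
    unfold Pm
    rw [show eval 1 (Matrix.of fun k l : Fin m =>
        (Polynomial.C (((c l).descFactorial (b k) : ℕ) : ℚ)) *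
          Polynomial.X ^ (c l - b k)).det =
        (evalRingHom 1) (Matrix.of fun k l : Fin m =>
        (Polynomial.C (((c l).descFactorial (b k) : ℕ) : ℚ)) *
          Polynomial.X ^ (c l - b k)).det from rfl, RingHom.map_det]
    congr 1
    ext k l
    show (((c l).descFactorial (b k) : ℕ) : ℚ) =
      (evalRingHom 1) (C (((c l).descFactorial (b k) : ℕ) : ℚ) * X ^ (c l - b k))
    simp
  rw [heval, eval_eq_sum_range]
  refine Finset.sum_pos' (fun i _ => by simpa using hnn i)
    ⟨(Pm b c).natDegree, Finset.self_mem_range_succ _, ?_⟩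
  simp only [one_pow, mul_one]
  exact lt_of_le_of_ne (hnn _) (Ne.symm fun h => hne (leadingCoeff_eq_zero.mp h))

theorem stmt_16 {n : ℕ} (E : Fin 2 → Fin (n + 1) → Bool)
    (hinc : ∑ i : Fin 2, ∑ j : Fin (n + 1), (if E i j then 1 else 0) = n + 1)
    (e : Fin (n + 1) → Fin 2 × Fin (n + 1))
    (he : Function.Injective e)
    (hone : ∀ q, E (e q).1 (e q).2 = true) :
    IsUnit (Matrix.of fun (q : Fin (n + 1)) (m : Fin (n + 1)) =>
        (((m : ℕ).descFactorial ((e q).2 : ℕ) : ℚ)) *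
          ((((e q).1 : ℕ) : ℚ)) ^ ((m : ℕ) - ((e q).2 : ℕ))) ↔
      ∀ j : Fin (n + 1),
        (j : ℕ) + 1 ≤ ∑ i : Fin 2, ∑ k ∈ Finset.univ.filter (fun k : Fin (n + 1) => k ≤ j),
          (if E i k then 1 else 0) := by
  classical
  set A : Finset (Fin (n+1)) := Finset.univ.filter (fun j => E 0 j) with hA
  set B : Finset (Fin (n+1)) := Finset.univ.filter (fun j => E 1 j) with hB
  set Mfull : Matrix (Fin (n+1)) (Fin (n+1)) ℚ := Matrix.of fun (q : Fin (n + 1)) (m : Fin (n + 1)) =>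
        (((m : ℕ).descFactorial ((e q).2 : ℕ) : ℚ)) *
          ((((e q).1 : ℕ) : ℚ)) ^ ((m : ℕ) - ((e q).2 : ℕ)) with hMfull
  -- cardinality from hinc
  have hcardAB : A.card + B.card = n + 1 := by
    have h0 : ∀ i : Fin 2, (∑ j : Fin (n+1), (if E i j then 1 else 0)) =
        (Finset.univ.filter (fun j => E i j)).card := by
      intro i
      rw [Finset.card_filter]
    rw [Fin.sum_univ_two, h0 0, h0 1] at hinc
    exact hinc
  -- Iic card
  have hIic : ∀ j : Fin (n+1), (Finset.univ.filter (fun k : Fin (n+1) => k ≤ j)).card = (j:ℕ) + 1 := by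
    intro j
    have : Finset.univ.filter (fun k : Fin (n+1) => k ≤ j) = Finset.Iic j := by
      ext k; simp [Finset.mem_Iic]
    rw [this, Fin.card_Iic]
  -- RHS conversion
  have hRHS : ∀ j : Fin (n+1), (∑ i : Fin 2, ∑ k ∈ Finset.univ.filter (fun k : Fin (n + 1) => k ≤ j),
        (if E i k then 1 else 0)) =
      (A.filter (· ≤ j)).card + (B.filter (· ≤ j)).card := by
    intro j
    rw [Fin.sum_univ_two]
    have h0 : ∀ i : Fin 2, (∑ k ∈ Finset.univ.filter (fun k : Fin (n + 1) => k ≤ j),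
        (if E i k then 1 else 0)) = ((Finset.univ.filter (fun k => E i k)).filter (· ≤ j)).card := by
      intro i
      rw [Finset.card_filter, Finset.sum_filter, Finset.sum_filter]
      refine Finset.sum_congr rfl fun k _ => ?_
      by_cases h1 : E i k <;> by_cases h2 : k ≤ j <;> simp [h1, h2]
    rw [h0 0, h0 1]
  -- split of Iic into A and Aᶜ parts
  have hsplit : ∀ j : Fin (n+1), (A.filter (· ≤ j)).card + (Aᶜ.filter (· ≤ j)).card = (j:ℕ) + 1 := by
    intro j
    rw [← Finset.card_union_of_disjoint
      (Finset.disjoint_filter_filter disjoint_compl_right), ← Finset.filter_union,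
      Finset.union_compl, hIic]
  -- surjectivity of e
  have hesurj : ∀ p : Fin 2 × Fin (n+1), E p.1 p.2 = true → ∃ q, e q = p := by
    have hFcard : (Finset.univ.filter (fun p : Fin 2 × Fin (n+1) => E p.1 p.2)).card = n + 1 := by
      rw [Finset.card_filter, Fintype.sum_prod_type]
      exact hinc
    have himg : Finset.univ.image e = Finset.univ.filter (fun p : Fin 2 × Fin (n+1) => E p.1 p.2) := by
      apply Finset.eq_of_subset_of_card_le
      · intro p hp
        obtain ⟨q, _, rfl⟩ := Finset.mem_image.mp hp
        exact Finset.mem_filter.mpr ⟨Finset.mem_univ _, hone q⟩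
      · rw [hFcard, Finset.card_image_of_injective _ he, Finset.card_univ, Fintype.card_fin]
    intro p hp
    have : p ∈ Finset.univ.image e := by
      rw [himg]; exact Finset.mem_filter.mpr ⟨Finset.mem_univ _, hp⟩
    obtain ⟨q, _, hq⟩ := Finset.mem_image.mp this
    exact ⟨q, hq⟩
  constructor
  · -- IsUnit → Pólya
    intro hU j
    by_contra hlt
    push_neg at hlt
    rw [hRHS j] at hlt
    have hdet : Mfull.det = 0 := by
      refine det_eq_zero_of_block Mfull (Finset.univ.filter (fun m : Fin (n+1) => m ≤ j))
        (Finset.univ.filter (fun q => (e q).2 ≤ j)) ?_ ?_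
      · have hTcard : (Finset.univ.filter (fun q => (e q).2 ≤ j)).card =
            (A.filter (· ≤ j)).card + (B.filter (· ≤ j)).card := by
          have h1 : (Finset.univ.filter (fun q => (e q).2 ≤ j)).card =
              (Finset.univ.filter (fun p : Fin 2 × Fin (n+1) => E p.1 p.2 ∧ p.2 ≤ j)).card := by
            refine Finset.card_bij (fun q _ => e q) ?_ ?_ ?_
            · intro q hq
              exact Finset.mem_filter.mpr ⟨Finset.mem_univ _, hone q, (Finset.mem_filter.mp hq).2⟩
            · intro q1 h1 q2 h2 heq
              exact he heq
            · intro p hp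
              obtain ⟨hpE, hpj⟩ := (Finset.mem_filter.mp hp).2
              obtain ⟨q, rfl⟩ := hesurj p hpE
              exact ⟨q, Finset.mem_filter.mpr ⟨Finset.mem_univ _, hpj⟩, rfl⟩
          have h2 : ∀ i : Fin 2, (∑ k : Fin (n+1), if E i k ∧ k ≤ j then 1 else 0) =
              ((Finset.univ.filter (fun k => E i k)).filter (· ≤ j)).card := by
            intro i
            rw [Finset.filter_filter, Finset.card_filter]
          rw [h1, Finset.card_filter, Fintype.sum_prod_type, Fin.sum_univ_two, h2 0, h2 1]
        rw [hTcard, hIic]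
        exact hlt
      · intro q hqT m hmS
        have hmj : m ≤ j := (Finset.mem_filter.mp hmS).2
        have hqj : ¬ (e q).2 ≤ j := fun h => hqT (Finset.mem_filter.mpr ⟨Finset.mem_univ _, h⟩)
        have hlt2 : (m:ℕ) < ((e q).2:ℕ) := by
          have h1 : (m:ℕ) ≤ (j:ℕ) := hmj
          have h2 : (j:ℕ) < ((e q).2:ℕ) := not_le.mp hqj
          omega
        show (((m : ℕ).descFactorial ((e q).2 : ℕ) : ℚ)) * _ = 0
        rw [Nat.descFactorial_eq_zero_iff_lt.mpr hlt2, Nat.cast_zero, zero_mul]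
    exact absurd ((Matrix.isUnit_iff_isUnit_det Mfull).mp hU) (by rw [hdet]; exact not_isUnit_zero)
  · -- Pólya → IsUnit
    intro hP
    rw [Matrix.isUnit_iff_isUnit_det, isUnit_iff_ne_zero]
    intro hdet
    obtain ⟨v, hvne, hv⟩ := Matrix.exists_mulVec_eq_zero_iff.mpr hdet
    have hcount : ∀ j : Fin (n+1), ((Aᶜ).filter (· ≤ j)).card ≤ (B.filter (· ≤ j)).card := by
      intro j
      have h1 := hP j
      rw [hRHS j] at h1
      have h2 := hsplit j
      omega
    have hBCcard : B.card = (Aᶜ).card := by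
      have h1 : A.card ≤ n + 1 := by
        have := Finset.card_le_univ A
        simpa [Finset.card_univ, Fintype.card_fin] using this
      have h2 : (Aᶜ).card = (n+1) - A.card := by
        rw [Finset.card_compl]
        simp
      omega
    have hrow : ∀ q, ∑ m : Fin (n+1), Mfull q m * v m = 0 := by
      intro q
      have h0 := congrFun hv q
      simpa [Matrix.mulVec, dotProduct] using h0
    have hvA : ∀ j, E 0 j = true → v j = 0 := by
      intro j hj
      obtain ⟨q, hq⟩ := hesurj (0, j) hj
      have h1 := hrow q
      rw [Finset.sum_eq_single j ?_ ?_] at h1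
      · have h2 : Mfull q j = ((j:ℕ).factorial : ℚ) := by
          simp only [hMfull, Matrix.of_apply, hq]
          simp [Nat.descFactorial_self]
        rw [h2] at h1
        have h3 : ((j:ℕ).factorial : ℚ) ≠ 0 := Nat.cast_ne_zero.mpr (Nat.factorial_ne_zero _)
        exact (mul_eq_zero.mp h1).resolve_left h3
      · intro m _ hmj
        simp only [hMfull, Matrix.of_apply, hq]
        have hmj' : (m:ℕ) ≠ (j:ℕ) := fun h => hmj (Fin.ext h)
        rcases lt_or_gt_of_ne hmj' with h | h
        · simp [Nat.descFactorial_eq_zero_iff_lt.mpr h]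
        · have hne : (m:ℕ) - (j:ℕ) ≠ 0 := by omega
          simp [zero_pow hne]
      · intro h
        exact absurd (Finset.mem_univ j) h
    have hvB : ∀ bb, bb ∈ B → (∑ m : Fin (n+1), ((m:ℕ).descFactorial ((bb : Fin (n+1)):ℕ) : ℚ) * v m) = 0 := by
      intro bb hbb
      have hbbE : E 1 bb = true := by
        have := Finset.mem_filter.mp hbb
        simpa using this.2
      obtain ⟨q, hq⟩ := hesurj (1, bb) hbbE
      have h1 := hrow q
      rw [← h1]
      refine Finset.sum_congr rfl fun m _ => ?_
      simp only [hMfull, Matrix.of_apply, hq]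
      norm_num
    -- submatrix setup
    have hBc : B.card = (Aᶜ).card := hBCcard
    let cemb : Fin ((Aᶜ : Finset (Fin (n+1))).card) ↪o Fin (n+1) := (Aᶜ).orderEmbOfFin rfl
    let bemb : Fin ((Aᶜ : Finset (Fin (n+1))).card) ↪o Fin (n+1) := B.orderEmbOfFin hBc
    have hcembmem : ∀ l, cemb l ∈ (Aᶜ : Finset (Fin (n+1))) :=
      fun l => Finset.orderEmbOfFin_mem (Aᶜ) rfl l
    have hbembmem : ∀ k, bemb k ∈ B := fun k => Finset.orderEmbOfFin_mem B hBc k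
    set bfun : Fin ((Aᶜ : Finset (Fin (n+1))).card) → ℕ := fun k => ((bemb k : Fin (n+1)) : ℕ) with hbfun
    set cfun : Fin ((Aᶜ : Finset (Fin (n+1))).card) → ℕ := fun l => ((cemb l : Fin (n+1)) : ℕ) with hcfun
    have hbsm : StrictMono bfun := fun x y h => bemb.strictMono h
    have hcsm : StrictMono cfun := fun x y h => cemb.strictMono h
    have hdom : ∀ k, bfun k ≤ cfun k := by
      intro k
      by_contra hlt
      push_neg at hlt
      set j : Fin (n+1) := cemb k with hj
      have hCge : (k:ℕ) + 1 ≤ ((Aᶜ : Finset (Fin (n+1))).filter (· ≤ j)).card := by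
        have hsub : (Finset.univ.filter (fun l => l ≤ k)).image
            (fun l => (cemb l : Fin (n+1))) ⊆ (Aᶜ : Finset (Fin (n+1))).filter (· ≤ j) := by
          intro x hx
          obtain ⟨l, hl, rfl⟩ := Finset.mem_image.mp hx
          refine Finset.mem_filter.mpr ⟨hcembmem l, ?_⟩
          exact cemb.monotone (Finset.mem_filter.mp hl).2
        have hcard : ((Finset.univ.filter (fun l => l ≤ k)).image
            (fun l => (cemb l : Fin (n+1)))).card = (k:ℕ) + 1 := by
          rw [Finset.card_image_of_injective _ cemb.injective]
          have heq : Finset.univ.filter (fun l => l ≤ k) = Finset.Iic k := by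
            ext l; simp [Finset.mem_Iic]
          rw [heq, Fin.card_Iic]
        calc (k:ℕ) + 1 = _ := hcard.symm
          _ ≤ _ := Finset.card_le_card hsub
      have hBle : (B.filter (· ≤ j)).card ≤ (k:ℕ) := by
        have hsub : B.filter (· ≤ j) ⊆ (Finset.univ.filter (fun l => l < k)).image
            (fun l => (bemb l : Fin (n+1))) := by
          intro x hx
          obtain ⟨hxB, hxj⟩ := Finset.mem_filter.mp hx
          have hxr : x ∈ Set.range bemb := by
            rw [Finset.range_orderEmbOfFin]
            exact hxB
          obtain ⟨l, hl⟩ := hxr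
          refine Finset.mem_image.mpr ⟨l, Finset.mem_filter.mpr ⟨Finset.mem_univ _, ?_⟩, hl⟩
          have h1 : bfun l < bfun k := by
            have h2 : (x : ℕ) ≤ (j : ℕ) := hxj
            have h3 : bfun l = (x : ℕ) := by rw [← hl]
            have h4 : (j:ℕ) = cfun k := rfl
            omega
          exact hbsm.lt_iff_lt.mp h1
        calc (B.filter (· ≤ j)).card ≤ _ := Finset.card_le_card hsub
          _ ≤ (Finset.univ.filter (fun l => l < k)).card := Finset.card_image_le
          _ = (k:ℕ) := by
            have heq : Finset.univ.filter (fun l => l < k) = Finset.Iio k := by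
              ext l; simp [Finset.mem_Iio]
            rw [heq, Fin.card_Iio]
      have := hcount j
      omega
    set w : Fin ((Aᶜ : Finset (Fin (n+1))).card) → ℚ := fun l => v (cemb l) with hw
    have hsub0 : (Matrix.of fun k l => (((cfun l).descFactorial (bfun k) : ℕ) : ℚ)).mulVec w = 0 := by
      funext k
      show (∑ l, (((cfun l).descFactorial (bfun k) : ℕ) : ℚ) * w l) = 0
      have h1 := hvB (bemb k) (hbembmem k)
      have h2 : (∑ m ∈ (Aᶜ : Finset (Fin (n+1))),
          ((m:ℕ).descFactorial (bfun k) : ℚ) * v m) = 0 := by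
        rw [← h1]
        refine Finset.sum_subset (Finset.subset_univ _) fun m _ hm => ?_
        have hmA : E 0 m = true := by
          by_contra hmA
          exact hm (Finset.mem_compl.mpr (fun hmem => hmA (by simpa using (Finset.mem_filter.mp hmem).2)))
        rw [hvA m hmA, mul_zero]
      rw [← h2]
      refine Finset.sum_bij (fun l _ => (cemb l : Fin (n+1))) ?_ ?_ ?_ ?_
      · intro l _
        exact hcembmem l
      · intro l1 _ l2 _ hl
        exact cemb.injective hl
      · intro m hm
        have hmr : m ∈ Set.range cemb := by
          rw [Finset.range_orderEmbOfFin]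
          exact hm
        obtain ⟨l, hl⟩ := hmr
        exact ⟨l, Finset.mem_univ _, hl⟩
      · intro l _
        rfl
    have hpos := det_desc_pos bfun cfun hbsm hcsm hdom
    have hwne : w ≠ 0 := by
      obtain ⟨m, hm⟩ := Function.ne_iff.mp hvne
      have hmC : m ∈ (Aᶜ : Finset (Fin (n+1))) := by
        refine Finset.mem_compl.mpr fun hmem => ?_
        exact hm (hvA m (by simpa using (Finset.mem_filter.mp hmem).2))
      have hmr : m ∈ Set.range cemb := by
        rw [Finset.range_orderEmbOfFin]
        exact hmC
      obtain ⟨l, hl⟩ := hmr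
      intro h0
      apply hm
      have := congrFun h0 l
      rw [hw] at this
      simpa [hl] using this
    have hdet0 : (Matrix.of fun k l => (((cfun l).descFactorial (bfun k) : ℕ) : ℚ)).det = 0 :=
      Matrix.exists_mulVec_eq_zero_iff.mp ⟨w, hwne, hsub0⟩
    exact absurd hdet0 (ne_of_gt hpos)
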